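/- Let n >= 1, p a prime dividing n+1, phi(x) in Z[x] monic and irreducible modulo p, a_0(x),...,a_{n-1}(x) in Z[x] of degree less than deg phi, and a_n an integer coprime to p. Then the rational polynomial f(x) = a_n * phi(x)^n/(n+1)! + sum_{j=0}^{n-1} a_j(x) * phi(x)^j/(j+1)! has no non-constant factor in Z[x] of degree less than deg phi. -/

import Mathlib

open Polynomial

theorem no_small_factor_rat (n : ℕ) (hn : 1 ≤ n) (p : ℕ) (hp : p.Prime)
    (hpn : p ∣ n + 1) (φ : Polynomial ℤ) (hmonic : φ.Monic)
    (hirr : Irreducible (φ.map (Int.castRingHom (ZMod p))))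
    (a : ℕ → Polynomial ℤ) (hdeg : ∀ j < n, (a j).degree < φ.degree)
    (an : ℤ) (han : IsCoprime (an : ℤ) (p : ℤ)) :
    ¬ ∃ h : Polynomial ℤ,
        0 < h.natDegree ∧ h.natDegree < φ.natDegree ∧
        ∃ g : Polynomial ℚ,
          C ((an : ℚ) / (n + 1).factorial) * (φ.map (Int.castRingHom ℚ)) ^ n +
            ∑ j ∈ Finset.range n,
              C ((1 : ℚ) / (j + 1).factorial) * ((a j).map (Int.castRingHom ℚ)) *
                (φ.map (Int.castRingHom ℚ)) ^ j
          = (h.map (Int.castRingHom ℚ)) * g := by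
  rintro ⟨h, h1, h2, g, heq⟩
  haveI : Fact p.Prime := ⟨hp⟩
  set toQ := Int.castRingHom ℚ with htoQ
  set toP := Int.castRingHom (ZMod p) with htoP
  set d := φ.natDegree with hd
  have hd1 : 1 ≤ d := by omega
  -- the integer coefficients c j = (n+1)!/(j+1)!
  set c : ℕ → ℕ := fun j => (n + 1) * (n.factorial / (j + 1).factorial) with hc_def
  have hc : ∀ j < n, c j * (j + 1).factorial = (n + 1).factorial := by
    intro j hj
    have hdvd : (j + 1).factorial ∣ n.factorial :=
      Nat.factorial_dvd_factorial (by omega)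
    simp only [hc_def]
    rw [mul_assoc, Nat.div_mul_cancel hdvd, ← Nat.factorial_succ]
  have hpc : ∀ j, (p : ℤ) ∣ (c j : ℤ) := by
    intro j
    exact_mod_cast Int.natCast_dvd_natCast.mpr (hpn.mul_right _)
  set F : Polynomial ℤ := C an * φ ^ n +
      ∑ j ∈ Finset.range n, C (c j : ℤ) * a j * φ ^ j with hF_def
  have hN : ((n + 1).factorial : ℚ) ≠ 0 := Nat.cast_ne_zero.mpr (Nat.factorial_ne_zero _)
  -- F over ℚ is (n+1)! times the given polynomial
  have hFQ : F.map toQ = C ((n + 1).factorial : ℚ) * (h.map toQ * g) := by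
    rw [← heq, hF_def]
    rw [Polynomial.map_add, Polynomial.map_mul, Polynomial.map_pow, map_C,
      Polynomial.map_sum, mul_add, Finset.mul_sum]
    congr 1
    · rw [← mul_assoc, ← C_mul]
      congr 2
      rw [htoQ]
      simp only [eq_intCast, Int.cast_natCast]  -- toQ an = (an : ℚ)
      field_simp
    · apply Finset.sum_congr rfl
      intro j hj
      rw [Finset.mem_range] at hj
      rw [Polynomial.map_mul, Polynomial.map_mul, Polynomial.map_pow, map_C,
        ← mul_assoc, ← mul_assoc, ← C_mul]
      congr 3
      rw [htoQ]
      simp only [eq_intCast, Int.cast_natCast]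
      have := hc j hj
      have h2' : ((c j : ℚ)) * ((j + 1).factorial : ℚ) = ((n + 1).factorial : ℚ) := by
        exact_mod_cast congrArg (Nat.cast : ℕ → ℚ) this
      have hj1 : ((j + 1).factorial : ℚ) ≠ 0 := Nat.cast_ne_zero.mpr (Nat.factorial_ne_zero _)
      field_simp
      linarith [h2']
  -- F mod p
  have hanP : (toP an) ≠ 0 := by
    intro e
    have : ((an : ℤ) : ZMod p) = 0 := e
    rw [ZMod.intCast_zmod_eq_zero_iff_dvd] at this
    exact (Nat.prime_iff_prime_int.mp hp).not_unit (han.isUnit_of_dvd' this dvd_rfl)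
  have hFP : F.map toP = C (toP an) * (φ.map toP) ^ n := by
    rw [hF_def, Polynomial.map_add, Polynomial.map_mul, Polynomial.map_pow, map_C,
      Polynomial.map_sum]
    have : ∀ j ∈ Finset.range n,
        (C ((c j : ℤ)) * a j * φ ^ j).map toP = 0 := by
      intro j _
      rw [Polynomial.map_mul, Polynomial.map_mul, map_C]
      have : toP ((c j : ℤ)) = 0 := by
        have : (((c j : ℤ)) : ZMod p) = 0 := by
          rw [ZMod.intCast_zmod_eq_zero_iff_dvd]
          exact hpc j
        exact this
      rw [this, map_zero, zero_mul, zero_mul]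
    rw [Finset.sum_congr rfl this, Finset.sum_const, smul_zero, add_zero]
  have hφPm : (φ.map toP).Monic := hmonic.map toP
  have hφPd : (φ.map toP).natDegree = d := hmonic.natDegree_map toP
  have hFP0 : F.map toP ≠ 0 := by
    rw [hFP]
    exact mul_ne_zero (fun e => hanP (C_eq_zero.mp e)) (pow_ne_zero _ hφPm.ne_zero)
  have hF0 : F ≠ 0 := by
    intro e; rw [e, Polynomial.map_zero] at hFP0; exact hFP0 rfl
  -- degree computations
  have hdegmapP : (F.map toP).natDegree = n * d := by
    rw [hFP, natDegree_C_mul hanP, natDegree_pow, hφPd]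
  have hdF_le : F.natDegree ≤ n * d := by
    rw [hF_def]
    apply le_trans (natDegree_add_le _ _)
    apply max_le
    · apply le_trans (natDegree_C_mul_le _ _)
      rw [natDegree_pow]
    · apply le_trans (natDegree_sum_le _ _)
      rw [Finset.fold_max_le]
      constructor
      · exact Nat.zero_le _
      intro j hj
      rw [Finset.mem_range] at hj
      apply le_trans (natDegree_mul_le)
      apply le_trans (Nat.add_le_add_right (natDegree_C_mul_le _ _) _)
      rw [natDegree_pow, ← hd]
      have haj : (a j).natDegree < d := by
        rcases eq_or_ne (a j) 0 with e | e
        · rw [e, natDegree_zero]; omega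
        · exact natDegree_lt_natDegree e (hdeg j hj)
      have : (a j).natDegree + j * d < (j + 1) * d := by
        rw [add_mul, one_mul]; omega
      have hjd : (j + 1) * d ≤ n * d := Nat.mul_le_mul_right d (by omega)
      omega
  have hdF : F.natDegree = n * d :=
    le_antisymm hdF_le (hdegmapP ▸ natDegree_map_le)
  -- Gauss lemma: h.primPart divides F in ℤ[X]
  have hh0 : h ≠ 0 := by
    intro e; rw [e, natDegree_zero] at h1; exact absurd h1 (lt_irrefl 0)
  have hhQdvd : h.map toQ ∣ F.map toQ := by
    rw [hFQ]; exact Dvd.dvd.mul_left (Dvd.intro g rfl) _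
  have hcontF : (F.content : ℚ) ≠ 0 := by
    exact_mod_cast fun e => hF0 (content_eq_zero_iff.mp (by exact_mod_cast e))
  have hprimQ : h.primPart.map toQ ∣ F.primPart.map toQ := by
    have h1' : h.primPart.map toQ ∣ F.map toQ :=
      dvd_trans (Polynomial.map_dvd toQ (h.primPart_dvd)) hhQdvd
    have hFd : F.map toQ = C (F.content : ℚ) * F.primPart.map toQ := by
      conv_lhs => rw [F.eq_C_content_mul_primPart]
      rw [Polynomial.map_mul, map_C, htoQ]
      norm_num
    have hu : IsUnit (C (F.content : ℚ)) := isUnit_C.mpr (isUnit_iff_ne_zero.mpr hcontF)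
    rw [hFd] at h1'
    exact (hu.dvd_mul_left).mp h1'
  have hdvdZ : h.primPart ∣ F := by
    refine dvd_trans ?_ F.primPart_dvd
    exact (IsPrimitive.Int.dvd_iff_map_cast_dvd_map_cast _ _ h.isPrimitive_primPart).mpr hprimQ
  obtain ⟨g', hg'⟩ := hdvdZ
  -- reduce the factorization mod p
  have hhp0 : h.primPart ≠ 0 := h.primPart_ne_zero
  have hg'0 : g' ≠ 0 := by
    intro e; rw [e, mul_zero] at hg'; exact hF0 hg'
  have hfacP : (h.primPart.map toP) * (g'.map toP) = C (toP an) * (φ.map toP) ^ n := by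
    rw [← Polynomial.map_mul, ← hg', hFP]
  have hhP0 : h.primPart.map toP ≠ 0 := by
    intro e
    rw [e, zero_mul] at hfacP
    exact mul_ne_zero (fun e2 => hanP (C_eq_zero.mp e2))
      (pow_ne_zero _ hφPm.ne_zero) hfacP.symm
  have hg'P0 : g'.map toP ≠ 0 := by
    intro e
    rw [e, mul_zero] at hfacP
    exact mul_ne_zero (fun e2 => hanP (C_eq_zero.mp e2))
      (pow_ne_zero _ hφPm.ne_zero) hfacP.symm
  -- degree bookkeeping
  have hsumZ : h.primPart.natDegree + g'.natDegree = n * d := by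
    rw [← hdF, hg', natDegree_mul hhp0 hg'0]
  have hsumP : (h.primPart.map toP).natDegree + (g'.map toP).natDegree = n * d := by
    rw [← natDegree_mul hhP0 hg'P0, hfacP, natDegree_C_mul hanP, natDegree_pow, hφPd]
  have hle1 : (h.primPart.map toP).natDegree ≤ h.primPart.natDegree := natDegree_map_le
  have hle2 : (g'.map toP).natDegree ≤ g'.natDegree := natDegree_map_le
  have hdeq : (h.primPart.map toP).natDegree = h.natDegree := by
    have := h.natDegree_primPart
    omega
  -- divisor of a prime power
  have hφPprime : Prime (φ.map toP) := UniqueFactorizationMonoid.irreducible_iff_prime.mp hirr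
  have hdvdpow : h.primPart.map toP ∣ (φ.map toP) ^ n := by
    refine ⟨C (toP an)⁻¹ * g'.map toP, ?_⟩
    have := congrArg (fun q => C (toP an)⁻¹ * q) hfacP.symm
    rw [← mul_assoc, ← C_mul, inv_mul_cancel₀ hanP, C_1, one_mul] at this
    rw [this]; ring
  obtain ⟨i, hin, hassoc⟩ := (dvd_prime_pow hφPprime n).mp hdvdpow
  obtain ⟨u, hu⟩ := hassoc
  have hu0 : (u : Polynomial (ZMod p)) ≠ 0 := u.isUnit.ne_zero
  have hdeg_i : h.natDegree = i * d := by
    have h3 := congrArg natDegree hu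
    rw [natDegree_mul hhP0 hu0, natDegree_eq_zero_of_isUnit u.isUnit, add_zero,
      natDegree_pow, hφPd] at h3
    rw [← hdeq, h3]
  -- contradiction
  rcases Nat.eq_zero_or_pos i with hi0 | hi1
  · rw [hi0, zero_mul] at hdeg_i; omega
  · have : d ≤ i * d := Nat.le_mul_of_pos_left d hi1
    omega
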